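/- Suppose that n(x) → 0 as x ↑ 0 (limit along real x < 0) and that ∫_{[0,∞)} λ^{-2} dν(λ) < ∞. Then n(x)/x → ∫_{[0,∞)} λ^{-2} dν(λ) as x ↑ 0, and this limit is positive whenever ν ≠ 0. -/

import Mathlib

open MeasureTheory Filter

theorem stmt_15 (ν : Measure ℝ) (hsupp : ν (Set.Iio 0) = 0)
    (hν : (∫⁻ t : ℝ, ENNReal.ofReal ((1 + t ^ 2)⁻¹) ∂ν) < ⊤)
    (c : ℝ) (n : ℝ → ℝ)
    (hn : ∀ x < (0 : ℝ), n x = c + ∫ t : ℝ, (1 / (t - x) - 1 / (t + 1)) ∂ν)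
    (hlim : Tendsto n (nhdsWithin 0 (Set.Iio 0)) (nhds 0))
    (hfin : (∫⁻ t : ℝ, ENNReal.ofReal ((t ^ 2)⁻¹) ∂ν) < ⊤) :
    Tendsto (fun x : ℝ => n x / x) (nhdsWithin 0 (Set.Iio 0))
      (nhds (∫ t : ℝ, (t ^ 2)⁻¹ ∂ν)) ∧
    (ν ≠ 0 → 0 < ∫ t : ℝ, (t ^ 2)⁻¹ ∂ν) := by
  -- a.e. nonneg
  have hae0 : ∀ᵐ t ∂ν, 0 ≤ t := by
    rw [ae_iff]
    simpa [Set.Iio, not_le] using hsupp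
  -- base integrable functions
  have hbase : Integrable (fun t : ℝ => (1 + t ^ 2)⁻¹) ν := by
    refine ⟨(Measurable.aestronglyMeasurable ((measurable_const.add (measurable_id.pow_const 2)).inv)), ?_⟩
    rw [hasFiniteIntegral_iff_ofReal (Eventually.of_forall fun t => by positivity)]
    exact hν
  have hinv2 : Integrable (fun t : ℝ => (t ^ 2)⁻¹) ν := by
    refine ⟨(Measurable.aestronglyMeasurable ((measurable_id.pow_const 2).inv)), ?_⟩
    rw [hasFiniteIntegral_iff_ofReal (Eventually.of_forall fun t => by positivity)]
    exact hfin
  -- integrability of f x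
  have hint_f : ∀ x : ℝ, x < 0 → Integrable (fun t : ℝ => 1 / (t - x) - 1 / (t + 1)) ν := by
    intro x hx
    have hm : 0 < min 1 (-x) := lt_min one_pos (by linarith)
    refine (hbase.const_mul (|1 + x| / min 1 (-x))).mono'
      (Measurable.aestronglyMeasurable ((measurable_const.div (measurable_id.sub_const x)).sub
        (measurable_const.div (measurable_id.add_const 1)))) ?_
    filter_upwards [hae0] with t ht
    have h1 : (0:ℝ) < t - x := by linarith
    have h2 : (0:ℝ) < t + 1 := by linarith
    have heq : 1 / (t - x) - 1 / (t + 1) = (1 + x) / ((t - x) * (t + 1)) := by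
      field_simp
      ring
    rw [heq, Real.norm_eq_abs, abs_div, abs_of_pos (show (0:ℝ) < (t - x) * (t + 1) by positivity)]
    have hden : min 1 (-x) * (1 + t ^ 2) ≤ (t - x) * (t + 1) := by
      have hle1 : min 1 (-x) ≤ 1 := min_le_left _ _
      have hle2 : min 1 (-x) ≤ -x := min_le_right _ _
      nlinarith [sq_nonneg t, mul_nonneg ht (neg_nonneg.2 hx.le)]
    calc |1 + x| / ((t - x) * (t + 1)) ≤ |1 + x| / (min 1 (-x) * (1 + t ^ 2)) := by
          apply div_le_div_of_nonneg_left (abs_nonneg _) (by positivity) hden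
      _ = |1 + x| / min 1 (-x) * (1 + t ^ 2)⁻¹ := by
          rw [div_mul_eq_div_div]
          rw [div_eq_mul_inv]
  -- pointwise bound for g
  have gbound : ∀ x : ℝ, x < 0 → ∀ t : ℝ, 0 ≤ t → |(t * (t - x))⁻¹| ≤ (t ^ 2)⁻¹ := by
    intro x hx t ht
    rcases eq_or_lt_of_le ht with h | h
    · simp [← h]
    · have h1 : (0:ℝ) < t - x := by linarith
      rw [abs_of_pos (by positivity)]
      apply inv_anti₀ (by positivity)
      nlinarith
  have hint_g : ∀ x : ℝ, x < 0 → Integrable (fun t : ℝ => (t * (t - x))⁻¹) ν := by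
    intro x hx
    refine hinv2.mono' (Measurable.aestronglyMeasurable
      ((measurable_id.mul (measurable_id.sub_const x)).inv)) ?_
    filter_upwards [hae0] with t ht
    exact gbound x hx t ht
  -- ν {0} = 0
  have hfin0 : ν {0} < ⊤ := by
    have h1 : ν {0} = ∫⁻ t in {(0:ℝ)}, ENNReal.ofReal ((1 + t ^ 2)⁻¹) ∂ν := by
      rw [lintegral_singleton]; norm_num
    rw [h1]
    exact lt_of_le_of_lt (lintegral_mono' Measure.restrict_le_self le_rfl) hν
  have hν0 : ν {0} = 0 := by
    by_contra h0
    set a : ℝ := (ν {0}).toReal with ha_def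
    have ha : 0 < a := ENNReal.toReal_pos h0 hfin0.ne
    set B : ℝ := (1 + |c| + a) / a with hB_def
    have hB1 : 1 ≤ B := by
      rw [le_div_iff₀ ha]; have := abs_nonneg c; linarith
    have hB : 0 < B := lt_of_lt_of_le one_pos hB1
    have key : ∀ x ∈ Set.Ioo (-(1/B)) 0, 1 ≤ n x := by
      rintro x ⟨hx1, hx2⟩
      have hxm1 : -1 < x := by
        have h : 1/B ≤ 1 := (div_le_one hB).2 hB1
        linarith
      have hBx : B < -(1/x) := by
        have h1 : 0 < -x := by linarith
        have h2 : -x < 1/B := by linarith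
        have h3 := one_div_lt_one_div_of_lt h1 h2
        rw [one_div_one_div] at h3
        rwa [one_div_neg_eq_neg_one_div] at h3
      have hnonneg : 0 ≤ᵐ[ν] fun t : ℝ => 1 / (t - x) - 1 / (t + 1) := by
        filter_upwards [hae0] with t ht
        have h1 : (0:ℝ) < t - x := by linarith
        have h2 : t - x ≤ t + 1 := by linarith
        have h3 := one_div_le_one_div_of_le h1 h2
        simp only [Pi.zero_apply]
        linarith
      have hset : ∫ t in {(0:ℝ)}, (1 / (t - x) - 1 / (t + 1)) ∂ν
          = (1 / (0 - x) - 1 / (0 + 1)) * a := by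
        rw [Measure.restrict_singleton, integral_smul_measure, integral_dirac]
        simp [mul_comm, smul_eq_mul]
        exact Or.inl rfl
      have hge : (1 / (0 - x) - 1 / (0 + 1)) * a ≤ ∫ t, (1 / (t - x) - 1 / (t + 1)) ∂ν := by
        rw [← hset]
        exact setIntegral_le_integral (hint_f x hx2) hnonneg
      have hval : 1 / (0 - x) - 1 / (0 + 1) = -(1/x) - 1 := by
        rw [zero_sub, one_div_neg_eq_neg_one_div]; norm_num
      rw [hn x hx2]
      rw [hval] at hge
      have : (B - 1) * a ≤ (-(1/x) - 1) * a := by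
        apply mul_le_mul_of_nonneg_right _ ha.le
        linarith
      have hBa : (B - 1) * a = 1 + |c| := by
        rw [hB_def, sub_mul, div_mul_cancel₀ _ ha.ne']
        ring
      nlinarith [abs_nonneg c, neg_abs_le c]
    have E1 : ∀ᶠ x in nhdsWithin (0:ℝ) (Set.Iio 0), 1 ≤ n x := by
      filter_upwards [Ioo_mem_nhdsLT_of_mem
        (⟨neg_lt_zero.mpr (by positivity), le_rfl⟩ :
        (0:ℝ) ∈ Set.Ioc (-(1/B)) 0)] with x hx using key x hx
    have E2 : ∀ᶠ x in nhdsWithin (0:ℝ) (Set.Iio 0), n x < 1 :=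
      hlim.eventually_lt_const one_pos
    obtain ⟨x, h1, h2⟩ := (E1.and E2).exists
    linarith
  -- a.e. positive
  have haepos : ∀ᵐ t ∂ν, 0 < t := by
    rw [ae_iff]
    have hsub : {t : ℝ | ¬ 0 < t} ⊆ Set.Iio 0 ∪ {0} := by
      intro t ht
      simp only [Set.mem_setOf_eq, not_lt] at ht
      rcases lt_or_eq_of_le ht with h | h
      · exact Or.inl h
      · exact Or.inr (by simp [h])
    exact le_antisymm (le_trans (measure_mono hsub)
      (le_trans (measure_union_le _ _) (by simp [hsupp, hν0]))) (zero_le)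
  -- identity a.e.
  have hid : ∀ x : ℝ, x < 0 → (fun t : ℝ => 1 / (t - x) - 1 / (t + 1))
      =ᵐ[ν] fun t => (1 / t - 1 / (t + 1)) + x * (t * (t - x))⁻¹ := by
    intro x hx
    filter_upwards [haepos] with t ht
    have h1 : t - x ≠ 0 := ne_of_gt (by linarith)
    have h2 : t + 1 ≠ 0 := ne_of_gt (by linarith)
    have h3 : t ≠ 0 := ne_of_gt ht
    field_simp
    ring
  have hf0int : Integrable (fun t : ℝ => 1 / t - 1 / (t + 1)) ν := by
    have := ((hint_f (-1) (by norm_num)).congr (hid (-1) (by norm_num))).sub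
      ((hint_g (-1) (by norm_num)).const_mul (-1))
    apply this.congr
    filter_upwards with t
    simp only [Pi.sub_apply]
    ring
  have hnf : ∀ x : ℝ, x < 0 →
      n x = (c + ∫ t, (1 / t - 1 / (t + 1)) ∂ν) + x * ∫ t, (t * (t - x))⁻¹ ∂ν := by
    intro x hx
    rw [hn x hx, integral_congr_ae (hid x hx),
      integral_add hf0int ((hint_g x hx).const_mul x), integral_const_mul]
    ring
  -- dominated convergence
  have hC : Tendsto (fun x : ℝ => ∫ t, (t * (t - x))⁻¹ ∂ν)
      (nhdsWithin 0 (Set.Iio 0)) (nhds (∫ t, (t ^ 2)⁻¹ ∂ν)) := by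
    apply tendsto_integral_filter_of_dominated_convergence (fun t : ℝ => (t ^ 2)⁻¹)
    · filter_upwards [self_mem_nhdsWithin] with x hx
      exact Measurable.aestronglyMeasurable ((measurable_id.mul (measurable_id.sub_const x)).inv)
    · filter_upwards [self_mem_nhdsWithin] with x hx
      filter_upwards [hae0] with t ht
      exact gbound x hx t ht
    · exact hinv2
    · filter_upwards [haepos] with t ht
      have hc : ContinuousAt (fun x : ℝ => (t * (t - x))⁻¹) 0 := by
        apply ContinuousAt.inv₀ (by fun_prop)
        simp; positivity
      have h5 : Tendsto (fun x : ℝ => (t * (t - x))⁻¹) (nhdsWithin 0 (Set.Iio 0))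
          (nhds (t * (t - 0))⁻¹) := hc.tendsto.mono_left nhdsWithin_le_nhds
      simpa [sq] using h5
  -- constant is zero
  have hx_tend : Tendsto (fun x : ℝ => x) (nhdsWithin (0:ℝ) (Set.Iio 0)) (nhds 0) :=
    tendsto_id.mono_left nhdsWithin_le_nhds
  have hn_eq : n =ᶠ[nhdsWithin (0:ℝ) (Set.Iio 0)] fun x =>
      (c + ∫ t, (1 / t - 1 / (t + 1)) ∂ν) + x * ∫ t, (t * (t - x))⁻¹ ∂ν := by
    filter_upwards [self_mem_nhdsWithin] with x hx using hnf x hx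
  have hlim2 : Tendsto n (nhdsWithin (0:ℝ) (Set.Iio 0))
      (nhds ((c + ∫ t, (1 / t - 1 / (t + 1)) ∂ν) + 0 * ∫ t, (t ^ 2)⁻¹ ∂ν)) := by
    rw [Filter.tendsto_congr' hn_eq]
    exact (tendsto_const_nhds.add (hx_tend.mul hC))
  have hK : c + ∫ t, (1 / t - 1 / (t + 1)) ∂ν = 0 := by
    have h := tendsto_nhds_unique hlim2 hlim
    rw [zero_mul, add_zero] at h
    exact h
  constructor
  · apply hC.congr'
    filter_upwards [self_mem_nhdsWithin] with x hx
    rw [hnf x hx, hK, zero_add, mul_comm, mul_div_assoc, div_self (ne_of_lt hx), mul_one]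
  · intro hne
    have h1 : 0 ≤ᵐ[ν] fun t : ℝ => (t ^ 2)⁻¹ := Eventually.of_forall fun t => by positivity
    rw [integral_pos_iff_support_of_nonneg_ae h1 hinv2]
    have hIoi : ν (Set.Ioi 0) ≠ 0 := by
      intro h
      apply hne
      have huniv : ν Set.univ = 0 := by
        have hsub : (Set.univ : Set ℝ) ⊆ Set.Iio 0 ∪ ({0} ∪ Set.Ioi 0) := by
          intro t _
          rcases lt_trichotomy t 0 with ht | ht | ht
          · exact Or.inl ht
          · exact Or.inr (Or.inl (by simp [ht]))
          · exact Or.inr (Or.inr ht)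
        refine le_antisymm (le_trans (measure_mono hsub) ?_) (zero_le)
        calc ν (Set.Iio 0 ∪ ({0} ∪ Set.Ioi 0)) ≤ ν (Set.Iio 0) + ν ({0} ∪ Set.Ioi 0) :=
              measure_union_le _ _
          _ ≤ ν (Set.Iio 0) + (ν {0} + ν (Set.Ioi 0)) := by
              gcongr; exact measure_union_le _ _
          _ = 0 := by rw [hsupp, hν0, h]; simp
      exact Measure.measure_univ_eq_zero.1 huniv
    have hsub : Set.Ioi (0:ℝ) ⊆ Function.support fun t : ℝ => (t ^ 2)⁻¹ := by
      intro t ht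
      simp only [Function.mem_support]
      exact (inv_pos.2 (pow_pos (Set.mem_Ioi.1 ht) 2)).ne'
    exact lt_of_lt_of_le (pos_iff_ne_zero.2 hIoi) (measure_mono hsub)
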